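/- The graph constructed in the feedback-vertex-set reduction has feedback vertex set number at most 1: deleting the vertex s_x (alternatively s_y) leaves an acyclic graph. -/

import Mathlib

/-- Vertex set of the graph constructed in the feedback-vertex-set reduction:
core vertices `s = 0`, the middle vertex `1` of the path of length 2 from `s` to
`s_x`, `s_x = 2`, `s_y = 3`; for each `i`, a path of length `L i` from `α_i` to `β_i`;
pendant γ-paths hanging from `s_x` and pendant δ-paths hanging from `s_y`. -/
def RedV (m p q : ℕ) (L : Fin m → ℕ) (Pg : Fin p → ℕ) (Pd : Fin q → ℕ) : Type :=
  Fin 4 ⊕ ((Σ i : Fin m, Fin (L i + 1)) ⊕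
    ((Σ j : Fin p, Fin (Pg j + 1)) ⊕ (Σ k : Fin q, Fin (Pd k + 1))))

/-- Adjacency-generating relation of the constructed graph: `s`–mid, mid–`s_x`,
`s`–`s_y`; `s_x` adjacent to every `α_i` (index 0) and `β_i` (index `L i`);
consecutive vertices on each `α_i`–`β_i` path; `s_x` attached to the first vertex of
each γ-path and `s_y` to the first vertex of each δ-path; consecutive vertices along
each pendant path. -/
def redRel (m p q : ℕ) (L : Fin m → ℕ) (Pg : Fin p → ℕ) (Pd : Fin q → ℕ) :
    RedV m p q L Pg Pd → RedV m p q L Pg Pd → Prop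
  | Sum.inl a, Sum.inl b =>
      ((a : ℕ) = 0 ∧ (b : ℕ) = 1) ∨ ((a : ℕ) = 1 ∧ (b : ℕ) = 2) ∨
        ((a : ℕ) = 0 ∧ (b : ℕ) = 3)
  | Sum.inl a, Sum.inr (Sum.inl u) =>
      (a : ℕ) = 2 ∧ ((u.2 : ℕ) = 0 ∨ (u.2 : ℕ) = L u.1)
  | Sum.inr (Sum.inl u), Sum.inr (Sum.inl v) =>
      u.1 = v.1 ∧ (v.2 : ℕ) = (u.2 : ℕ) + 1
  | Sum.inl a, Sum.inr (Sum.inr (Sum.inl u)) => (a : ℕ) = 2 ∧ (u.2 : ℕ) = 0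
  | Sum.inr (Sum.inr (Sum.inl u)), Sum.inr (Sum.inr (Sum.inl v)) =>
      u.1 = v.1 ∧ (v.2 : ℕ) = (u.2 : ℕ) + 1
  | Sum.inl a, Sum.inr (Sum.inr (Sum.inr u)) => (a : ℕ) = 3 ∧ (u.2 : ℕ) = 0
  | Sum.inr (Sum.inr (Sum.inr u)), Sum.inr (Sum.inr (Sum.inr v)) =>
      u.1 = v.1 ∧ (v.2 : ℕ) = (u.2 : ℕ) + 1
  | _, _ => False

/-- The graph constructed in the feedback-vertex-set reduction. -/
def redGraph (m p q : ℕ) (L : Fin m → ℕ) (Pg : Fin p → ℕ) (Pd : Fin q → ℕ) :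
    SimpleGraph (RedV m p q L Pg Pd) :=
  SimpleGraph.fromRel (redRel m p q L Pg Pd)

open SimpleGraph

theorem acyclic_of_height {V : Type*} {G : SimpleGraph V} (h : V → ℕ)
    (H1 : ∀ u v, G.Adj u v → h u ≠ h v)
    (H2 : ∀ v u w, G.Adj v u → G.Adj v w → h u < h v → h w < h v → u = w) :
    G.IsAcyclic := by
  intro a c hc
  classical
  obtain ⟨v, hv, hmax⟩ := c.support.toFinset.exists_max_image h
    ⟨a, List.mem_toFinset.2 c.start_mem_support⟩
  rw [List.mem_toFinset] at hv
  have key : ∀ (c : G.Walk v v), c.IsCycle → (∀ x ∈ c.support, h x ≤ h v) → False := by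
    intro c hc hm
    cases c with
    | nil => exact hc.ne_nil rfl
    | @cons _ b _ hvb p =>
      have h3 : 3 ≤ p.length + 1 := by
        simpa using hc.three_le_length
      rw [Walk.cons_isCycle_iff] at hc
      have hd : p.darts ≠ [] := by
        intro h0
        have := p.length_darts
        rw [h0] at this
        simp at this
        omega
      have hdm : p.darts.getLast hd ∈ p.darts := List.getLast_mem hd
      have hsnd : (p.darts.getLast hd).snd = v := by simp [p.getLast_darts_eq_lastDart hd]
      have hadj2 := (p.darts.getLast hd).adj
      rw [hsnd] at hadj2
      have hfst : (p.darts.getLast hd).fst ∈ p.support :=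
        Walk.dart_fst_mem_support_of_mem_darts p hdm
      have hb : h b < h v :=
        lt_of_le_of_ne (hm b (by simp)) fun e => H1 v b hvb e.symm
      have hw : h (p.darts.getLast hd).fst < h v :=
        lt_of_le_of_ne (hm _ (by simp [hfst])) fun e => H1 _ v hadj2 e
      have heq := H2 v b _ hvb hadj2.symm hb hw
      have hme : (p.darts.getLast hd).edge ∈ p.edges := List.mem_map_of_mem hdm
      have hme' : s((p.darts.getLast hd).toProd.1, (p.darts.getLast hd).toProd.2) ∈ p.edges :=
        hme
      rw [hsnd, ← heq] at hme'
      apply hc.2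
      rw [Sym2.eq_swap]
      exact hme'
  apply key (c.rotate v hv) (hc.rotate hv)
  intro x hx
  rw [Walk.support_eq_cons] at hx
  rcases List.mem_cons.1 hx with rfl | hx
  · exact hmax x (List.mem_toFinset.2 hv)
  · exact hmax x (List.mem_toFinset.2
      (List.mem_of_mem_tail (((c.support_rotate v hv).mem_iff).1 hx)))

/-- Height function on the reduction graph minus `s_x`. -/
def redHt (m p q : ℕ) (L : Fin m → ℕ) (Pg : Fin p → ℕ) (Pd : Fin q → ℕ) :
    RedV m p q L Pg Pd → ℕ
  | Sum.inl a => if (a : ℕ) = 0 then 0 else 1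
  | Sum.inr (Sum.inl u) => (u.2 : ℕ)
  | Sum.inr (Sum.inr (Sum.inl u)) => (u.2 : ℕ)
  | Sum.inr (Sum.inr (Sum.inr u)) => (u.2 : ℕ) + 2

/-- Parent function on the reduction graph minus `s_x`. -/
def redPar (m p q : ℕ) (L : Fin m → ℕ) (Pg : Fin p → ℕ) (Pd : Fin q → ℕ) :
    RedV m p q L Pg Pd → RedV m p q L Pg Pd
  | Sum.inl _ => Sum.inl 0
  | Sum.inr (Sum.inl u) =>
      Sum.inr (Sum.inl ⟨u.1, ⟨(u.2 : ℕ) - 1, lt_of_le_of_lt (Nat.sub_le _ _) u.2.isLt⟩⟩)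
  | Sum.inr (Sum.inr (Sum.inl u)) =>
      Sum.inr (Sum.inr (Sum.inl ⟨u.1, ⟨(u.2 : ℕ) - 1, lt_of_le_of_lt (Nat.sub_le _ _) u.2.isLt⟩⟩))
  | Sum.inr (Sum.inr (Sum.inr u)) =>
      if (u.2 : ℕ) = 0 then Sum.inl 3 else
        Sum.inr (Sum.inr (Sum.inr ⟨u.1, ⟨(u.2 : ℕ) - 1, lt_of_le_of_lt (Nat.sub_le _ _) u.2.isLt⟩⟩))

lemma inl_ne_two {m p q : ℕ} {L : Fin m → ℕ} {Pg : Fin p → ℕ} {Pd : Fin q → ℕ}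
    {x : Fin 4} (h : (Sum.inl x : RedV m p q L Pg Pd) ≠ Sum.inl 2) : (x : ℕ) ≠ 2 := by
  intro hh
  apply h
  congr 1
  exact Fin.ext (by simpa using hh)

lemma redHt_ne {m p q : ℕ} {L : Fin m → ℕ} {Pg : Fin p → ℕ} {Pd : Fin q → ℕ}
    (u v : RedV m p q L Pg Pd) (hu : u ≠ Sum.inl 2) (hv : v ≠ Sum.inl 2)
    (h : redRel m p q L Pg Pd u v) :
    redHt m p q L Pg Pd u ≠ redHt m p q L Pg Pd v := by
  rcases u with a | u | u | u <;> rcases v with b | v | v | v <;>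
    simp only [redRel, redHt] at h ⊢
  · have := inl_ne_two hv
    rcases h with ⟨h1, h2⟩ | ⟨h1, h2⟩ | ⟨h1, h2⟩ <;> simp [h1, h2] at this ⊢ <;> omega
  · exact absurd (by congr 1; exact Fin.ext (by simpa using h.1)) hu
  · exact absurd (by congr 1; exact Fin.ext (by simpa using h.1)) hu
  · obtain ⟨h1, h2⟩ := h
    rw [if_neg (by omega : ¬ (a : ℕ) = 0)]
    omega
  · omega
  · omega
  · omega

lemma redPar_eq {m p q : ℕ} {L : Fin m → ℕ} {Pg : Fin p → ℕ} {Pd : Fin q → ℕ}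
    (v u : RedV m p q L Pg Pd) (hv : v ≠ Sum.inl 2) (hu : u ≠ Sum.inl 2)
    (h : redRel m p q L Pg Pd v u ∨ redRel m p q L Pg Pd u v)
    (hlt : redHt m p q L Pg Pd u < redHt m p q L Pg Pd v) :
    u = redPar m p q L Pg Pd v := by
  rcases v with a | ⟨i, k⟩ | ⟨i, k⟩ | ⟨i, k⟩ <;> rcases u with b | ⟨i', k'⟩ | ⟨i', k'⟩ | ⟨i', k'⟩ <;>
      simp only [redRel, redHt, redPar, or_false, false_or] at h hlt ⊢
  -- v = inl a, u = inl b
  · have ha := inl_ne_two hv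
    have hb := inl_ne_two hu
    have hb0 : (b : ℕ) = 0 := by
      rcases h with (⟨h1, h2⟩ | ⟨h1, h2⟩ | ⟨h1, h2⟩) | (⟨h1, h2⟩ | ⟨h1, h2⟩ | ⟨h1, h2⟩) <;>
        simp [h1, h2] at ha hb hlt ⊢ <;> omega
    congr 1
    exact Fin.ext (by simpa using hb0)
  -- v = inl a, u = α
  · exact absurd (by congr 1; exact Fin.ext (by simpa using h.1)) hv
  -- v = inl a, u = γ
  · exact absurd (by congr 1; exact Fin.ext (by simpa using h.1)) hv
  -- v = inl a, u = δ
  · obtain ⟨h1, h2⟩ := h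
    rw [if_neg (by omega : ¬ (a : ℕ) = 0)] at hlt
    omega
  -- v = α, u = inl b
  · exact absurd (by congr 1; exact Fin.ext (by simpa using h.1)) hu
  -- v = α, u = α
  · rcases h with ⟨rfl, h2⟩ | ⟨rfl, h2⟩
    · omega
    · have hk : k' = (⟨(k : ℕ) - 1, lt_of_le_of_lt (Nat.sub_le _ _) k.isLt⟩
          : Fin (L i' + 1)) := Fin.ext (show k'.val = (k : ℕ) - 1 by omega)
      rw [hk]
  -- v = γ, u = inl b
  · exact absurd (by congr 1; exact Fin.ext (by simpa using h.1)) hu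
  -- v = γ, u = γ
  · rcases h with ⟨rfl, h2⟩ | ⟨rfl, h2⟩
    · omega
    · have hk : k' = (⟨(k : ℕ) - 1, lt_of_le_of_lt (Nat.sub_le _ _) k.isLt⟩
          : Fin (Pg i' + 1)) := Fin.ext (show k'.val = (k : ℕ) - 1 by omega)
      rw [hk]
  -- v = δ, u = inl b
  · obtain ⟨h1, h2⟩ := h
    refine Eq.trans ?_ (if_pos h2).symm
    congr 1
    exact Fin.ext (by simpa using h1)
  -- v = δ, u = δ
  · rcases h with ⟨rfl, h2⟩ | ⟨rfl, h2⟩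
    · omega
    · refine Eq.trans ?_ (if_neg (by omega : ¬ (k : ℕ) = 0)).symm
      have hk : k' = (⟨(k : ℕ) - 1, lt_of_le_of_lt (Nat.sub_le _ _) k.isLt⟩
          : Fin (Pd i' + 1)) := Fin.ext (show k'.val = (k : ℕ) - 1 by omega)
      rw [hk]

/-- The constructed graph has feedback vertex set number at most 1: deleting the
vertex `s_x` leaves an acyclic graph. -/
theorem redGraph_minus_sx_acyclic (m p q : ℕ) (L : Fin m → ℕ)
    (Pg : Fin p → ℕ) (Pd : Fin q → ℕ) :
    ((redGraph m p q L Pg Pd).induce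
      {v : RedV m p q L Pg Pd | v ≠ Sum.inl (2 : Fin 4)}).IsAcyclic := by
  apply acyclic_of_height (fun x => redHt m p q L Pg Pd x.val)
  · rintro ⟨u, hu⟩ ⟨v, hv⟩ hadj
    have h' : (redGraph m p q L Pg Pd).Adj u v := hadj
    rw [redGraph, SimpleGraph.fromRel_adj] at h'
    rcases h'.2 with h | h
    · exact redHt_ne u v hu hv h
    · exact fun e => redHt_ne v u hv hu h e.symm
  · rintro ⟨v, hv⟩ ⟨u, hu⟩ ⟨w, hw⟩ h1 h2 l1 l2
    have h1' : (redGraph m p q L Pg Pd).Adj v u := h1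
    have h2' : (redGraph m p q L Pg Pd).Adj v w := h2
    rw [redGraph, SimpleGraph.fromRel_adj] at h1' h2'
    apply Subtype.ext
    have e1 := redPar_eq v u hv hu h1'.2 l1
    have e2 := redPar_eq v w hv hw h2'.2 l2
    simp only [e1, e2]
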